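/- Let S = {s_1 < s_2 < ... < s_n} be a (set) signature for a monograph G with m negative values (s_1 < ... < s_m < 0 ≤ s_{m+1}). Then for each r ≥ 1, the vertex labeled s_{n-r+1} (the r-th largest non-negative signature value) is adjacent to at most r−1 vertices with negative labels. -/

import Mathlib

/-- In a monograph (set signature realized by an injective labeling `ℓ`), the vertex
labeled with the `r`-th largest non-negative signature value (where `r` counts the
elements of the signature that are `≥ ℓ v`) is adjacent to at most `r - 1` vertices
with negative labels. -/
theorem rth_largest_few_negative_neighbors {V : Type*} [Fintype V] [DecidableEq V]
    (G : SimpleGraph V) [DecidableRel G.Adj] (ℓ : V → ℤ)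
    (hinj : Function.Injective ℓ)
    (hsig : ∀ v w : V, v ≠ w → (G.Adj v w ↔ ∃ u : V, ℓ u = |ℓ v - ℓ w|))
    (v : V) (hv : 0 ≤ ℓ v) :
    (Finset.univ.filter fun w => G.Adj v w ∧ ℓ w < 0).card ≤
      (Finset.univ.filter fun u => ℓ v ≤ ℓ u).card - 1 := by
  classical
  set A := Finset.univ.filter fun w => G.Adj v w ∧ ℓ w < 0 with hA
  set B0 := Finset.univ.filter fun u => ℓ v ≤ ℓ u with hB0
  have hvB0 : v ∈ B0 := by simp [hB0]
  have hBcard : (B0.erase v).card = B0.card - 1 := Finset.card_erase_of_mem hvB0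
  rw [← hBcard]
  -- for each w in A, there is a witness
  have hwit : ∀ w ∈ A, ∃ u : V, ℓ u = |ℓ v - ℓ w| := by
    intro w hw
    rw [hA, Finset.mem_filter] at hw
    exact (hsig v w (G.ne_of_adj hw.2.1)).mp hw.2.1
  choose f hf using hwit
  have hval : ∀ w (hw : w ∈ A), ℓ (f w hw) = ℓ v - ℓ w := by
    intro w hw
    have hneg : ℓ w < 0 := by
      have := hw; rw [hA, Finset.mem_filter] at this; exact this.2.2
    rw [hf w hw, abs_of_pos (by omega)]
  apply Finset.card_le_card_of_injOn (fun w => if hw : w ∈ A then f w hw else v)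
  · intro w hw
    simp only [Finset.mem_coe] at hw
    simp only [dif_pos hw]
    have hneg : ℓ w < 0 := by
      have := hw; rw [hA, Finset.mem_filter] at this; exact this.2.2
    have hgt : ℓ v < ℓ (f w hw) := by rw [hval w hw]; omega
    refine Finset.mem_erase.mpr ⟨?_, ?_⟩
    · intro h; rw [h] at hgt; omega
    · simp [hB0]; omega
  · intro w1 h1 w2 h2 heq
    simp only [Finset.mem_coe] at h1 h2
    simp only [dif_pos h1, dif_pos h2] at heq
    have : ℓ v - ℓ w1 = ℓ v - ℓ w2 := by rw [← hval w1 h1, ← hval w2 h2, heq]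
    exact hinj (by omega)
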